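/- Let d < 0 be an integer with d ≡ 1 (mod 8) and whose Legendre symbol modulo 7 satisfies (d/7) = −1. Then there do not exist integers a, b, c with 14 dividing a and b² − 4ac = 5d. Equivalently, the set of positive definite integral binary quadratic forms ax² + bxy + cy² of discriminant 5d whose leading coefficient a is divisible by 14 is empty. -/
import Mathlib


instance : Fact (Nat.Prime 7) := ⟨by norm_num⟩

/-- Let `d < 0` be an integer with `d ≡ 1 (mod 8)` and Legendre symbol
`(d/7) = -1`. Then there do not exist integers `a, b, c` with `14 ∣ a` and
`b² - 4ac = 5d`; equivalently, the set of positive definite integral binary quadratic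
forms of discriminant `5d` with leading coefficient divisible by `14` is empty. -/
theorem no_forms_conductor_14 (d : ℤ) (hd : d < 0) (hmod : d % 8 = 1)
    (hleg : legendreSym 7 d = -1) :
    ¬ ∃ a b c : ℤ, (14 : ℤ) ∣ a ∧ b ^ 2 - 4 * a * c = 5 * d := by
  rintro ⟨a, b, c, ⟨k, rfl⟩, heq⟩
  -- reduce the equation modulo 8
  have hd8 : (d : ZMod 8) = 1 := by
    have : d = 8 * (d / 8) + 1 := by omega
    have h80 : (8 : ZMod 8) = 0 := by decide
    rw [this]; push_cast
    linear_combination ((d/8 : ℤ) : ZMod 8) * h80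
  have h8 : ((b : ZMod 8)) ^ 2 = 5 := by
    have := congrArg (Int.cast : ℤ → ZMod 8) heq
    push_cast at this
    rw [hd8] at this
    have h56 : (56 : ZMod 8) = 0 := by decide
    linear_combination this + (((k : ZMod 8)) * ((c : ZMod 8))) * h56
  revert h8
  generalize (b : ZMod 8) = x
  revert x
  decide
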